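/- Let M be a set with an action of the circle group (the group of unit complex numbers), and let S³ = {(z₁, z₂) ∈ ℂ² : |z₁|² + |z₂|² = 1}. Form the quotient Q* = (M × S³)/∼ of M × S³ by the circle action τ · (m, (z₁, z₂)) = (τ·m, (τ·z₁, τ⁻¹·z₂)). Then the formula ζ · [m, (z₁, z₂)] = [ζ·m, (z₁, ζ⁻¹·z₂)] descends to a well-defined action of the circle group on Q*, and a class [m, (z₁, z₂)] is a fixed point of this action if and only if z₁ = 0, or (z₂ = 0 and m is a fixed point of the action on M). -/

import Mathlib

/-- The unit sphere `S³ ⊆ ℂ²`. -/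
def SphereS3 : Type := {z : ℂ × ℂ // ‖z.1‖ ^ 2 + ‖z.2‖ ^ 2 = 1}

/-- Two points of `M × S³` are related iff they differ by the twisted circle
action `τ · (m, (z₁, z₂)) = (τ·m, (τ·z₁, τ⁻¹·z₂))`. -/
def antiHopfRel (M : Type*) [SMul Circle M] (a b : M × SphereS3) : Prop :=
  ∃ τ : Circle, b.1 = τ • a.1 ∧ b.2.val.1 = (τ : ℂ) * a.2.val.1 ∧
    b.2.val.2 = ((τ⁻¹ : Circle) : ℂ) * a.2.val.2

/-- The quotient `Q* = (M × S³)/∼` of the construction `γ*`. -/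
def AntiHopfQuot (M : Type*) [SMul Circle M] : Type _ := Quot (antiHopfRel M)

/-- The class of `(m, (z₁, z₂))` in `Q*`. -/
def antiHopfMk (M : Type*) [SMul Circle M] (m : M) (z₁ z₂ : ℂ)
    (h : ‖z₁‖ ^ 2 + ‖z₂‖ ^ 2 = 1) : AntiHopfQuot M :=
  Quot.mk (antiHopfRel M) (m, ⟨(z₁, z₂), h⟩)

section Aux
variable {M : Type*} [MulAction Circle M]

lemma abs_circle_mul (τ : Circle) (z : ℂ) :
    ‖(τ : ℂ) * z‖ = ‖z‖ := by
  simp [norm_mul, Circle.norm_coe]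

/-- The map inducing the action. -/
noncomputable def antiHopfMap (ζ : Circle) (p : M × SphereS3) : M × SphereS3 :=
  (ζ • p.1, ⟨(p.2.val.1, ((ζ⁻¹ : Circle) : ℂ) * p.2.val.2), by
    have := p.2.property
    rw [abs_circle_mul]; exact this⟩)

lemma antiHopfRel_equiv : Equivalence (antiHopfRel M) := by
  constructor
  · intro a; exact ⟨1, by simp⟩
  · rintro a b ⟨τ, h1, h2, h3⟩
    refine ⟨τ⁻¹, ?_, ?_, ?_⟩
    · rw [h1, ← mul_smul, inv_mul_cancel, one_smul]
    · rw [h2]; push_cast; field_simp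
    · rw [h3]; push_cast [inv_inv]; field_simp
  · rintro a b c ⟨τ, h1, h2, h3⟩ ⟨σ, g1, g2, g3⟩
    refine ⟨σ * τ, ?_, ?_, ?_⟩
    · rw [g1, h1, mul_smul]
    · rw [g2, h2]; push_cast; ring
    · rw [g3, h3]; push_cast [mul_inv]; ring

lemma antiHopfMap_rel (ζ : Circle) {a b : M × SphereS3} (h : antiHopfRel M a b) :
    antiHopfRel M (antiHopfMap ζ a) (antiHopfMap ζ b) := by
  obtain ⟨τ, h1, h2, h3⟩ := h
  refine ⟨τ, ?_, h2, ?_⟩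
  · simp only [antiHopfMap, h1, smul_comm ζ τ]
  · simp only [antiHopfMap]
    rw [h3]; push_cast; ring

/-- `-1` as an element of the circle group. -/
noncomputable def circleNegOne : Circle := Circle.exp Real.pi

lemma circleNegOne_coe : (circleNegOne : ℂ) = -1 := by
  rw [circleNegOne, Circle.coe_exp]
  simpa using Complex.exp_pi_mul_I

end Aux

theorem gammaStarM_action_fixed_points (M : Type*) [MulAction Circle M] :
    ∃ act : Circle → AntiHopfQuot M → AntiHopfQuot M,
      (∀ q, act 1 q = q) ∧
      (∀ (ζ ξ : Circle) q, act (ζ * ξ) q = act ζ (act ξ q)) ∧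
      (∀ (ζ : Circle) (m : M) (z₁ z₂ : ℂ)
          (h : ‖z₁‖ ^ 2 + ‖z₂‖ ^ 2 = 1)
          (h' : ‖z₁‖ ^ 2 + ‖((ζ⁻¹ : Circle) : ℂ) * z₂‖ ^ 2 = 1),
        act ζ (antiHopfMk M m z₁ z₂ h) =
          antiHopfMk M (ζ • m) z₁ (((ζ⁻¹ : Circle) : ℂ) * z₂) h') ∧
      (∀ (m : M) (z₁ z₂ : ℂ)
          (h : ‖z₁‖ ^ 2 + ‖z₂‖ ^ 2 = 1),
        (∀ ζ : Circle, act ζ (antiHopfMk M m z₁ z₂ h) = antiHopfMk M m z₁ z₂ h) ↔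
          (z₁ = 0 ∨ (z₂ = 0 ∧ ∀ τ : Circle, τ • m = m))) := by
  refine ⟨fun ζ => Quot.map (antiHopfMap ζ) (fun a b => antiHopfMap_rel ζ), ?_, ?_, ?_, ?_⟩
  · intro q
    induction q using Quot.ind with
    | _ p =>
      show Quot.mk _ (antiHopfMap 1 p) = Quot.mk _ p
      congr 1
      simp [antiHopfMap]
      rfl
  · intro ζ ξ q
    induction q using Quot.ind with
    | _ p =>
      show Quot.mk _ (antiHopfMap (ζ * ξ) p) = Quot.mk _ (antiHopfMap ζ (antiHopfMap ξ p))
      congr 1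
      simp only [antiHopfMap, mul_smul]
      refine Prod.ext rfl (Subtype.ext (Prod.ext rfl ?_))
      push_cast [mul_inv]
      ring
  · intro ζ m z₁ z₂ h h'
    rfl
  · intro m z₁ z₂ h
    have key : ∀ ζ : Circle,
        ((Quot.mk (antiHopfRel M) (antiHopfMap ζ (m, ⟨(z₁, z₂), h⟩)) : AntiHopfQuot M)
          = antiHopfMk M m z₁ z₂ h) ↔
        antiHopfRel M (antiHopfMap ζ (m, ⟨(z₁, z₂), h⟩)) (m, ⟨(z₁, z₂), h⟩) := by
      intro ζ
      rw [antiHopfMk, Quot.eq, Equivalence.eqvGen_iff antiHopfRel_equiv]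
    constructor
    · intro hfix
      by_cases hz1 : z₁ = 0
      · exact Or.inl hz1
      · have main : ∀ ζ : Circle, ∃ τ : Circle, m = τ • (ζ • m) ∧
            z₁ = (τ : ℂ) * z₁ ∧
            z₂ = ((τ⁻¹ : Circle) : ℂ) * (((ζ⁻¹ : Circle) : ℂ) * z₂) := by
          intro ζ
          obtain ⟨τ, h1, h2, h3⟩ := (key ζ).mp (hfix ζ)
          exact ⟨τ, h1, h2, h3⟩
        have tau_one : ∀ τ : Circle, z₁ = (τ : ℂ) * z₁ → τ = 1 := by
          intro τ h2
          have hmm : (τ : ℂ) * z₁ = 1 * z₁ := by rw [one_mul]; exact h2.symm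
          have hτ : (τ : ℂ) = 1 := mul_right_cancel₀ hz1 hmm
          exact Circle.coe_eq_one.mp hτ
        refine Or.inr ⟨?_, ?_⟩
        · obtain ⟨τ, h1, h2, h3⟩ := main circleNegOne
          have hτ1 : τ = 1 := tau_one τ h2
          rw [hτ1] at h3
          have hneg : ((circleNegOne⁻¹ : Circle) : ℂ) = -1 := by
            rw [Circle.coe_inv, circleNegOne_coe]; norm_num
          rw [hneg] at h3
          simp only [inv_one, Circle.coe_one, one_mul] at h3
          have : (2 : ℂ) * z₂ = 0 := by linear_combination h3
          simpa using this
        · intro τ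
          obtain ⟨σ, h1, h2, h3⟩ := main τ⁻¹
          have hσ1 : σ = 1 := tau_one σ h2
          rw [hσ1, one_smul] at h1
          conv_lhs => rw [h1]
          rw [← mul_smul, mul_inv_cancel, one_smul]
    · rintro (hz1 | ⟨hz2, hm⟩) ζ
      · refine ((key ζ).mpr ?_)
        refine ⟨ζ⁻¹, ?_, ?_, ?_⟩
        · show m = ζ⁻¹ • (ζ • m)
          rw [← mul_smul, inv_mul_cancel, one_smul]
        · show z₁ = ((ζ⁻¹ : Circle) : ℂ) * z₁
          rw [hz1, mul_zero]
        · show z₂ = ((ζ⁻¹⁻¹ : Circle) : ℂ) * (((ζ⁻¹ : Circle) : ℂ) * z₂)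
          rw [inv_inv]
          push_cast
          field_simp
      · refine ((key ζ).mpr ?_)
        refine ⟨1, ?_, ?_, ?_⟩
        · show m = (1 : Circle) • (ζ • m)
          rw [one_smul, hm]
        · show z₁ = ((1 : Circle) : ℂ) * z₁
          rw [Circle.coe_one, one_mul]
        · show z₂ = (((1 : Circle)⁻¹ : Circle) : ℂ) * (((ζ⁻¹ : Circle) : ℂ) * z₂)
          rw [hz2, mul_zero, mul_zero]
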